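/- Define a relation ⊴ on ℤ by a ⊴ b if and only if a = b or b − a ≥ 2. Then ⊴ is a partial order on ℤ, and the resulting poset P is a regular poset representation of ℤ via translations: every order automorphism of P is of the form x ↦ x + n for some n ∈ ℤ, the translation action is free and transitive, and moreover P is not graded (there is no function ρ : P → ℤ with a ◁ b implying ρ(a) < ρ(b) and ρ(b) = ρ(a) + 1 whenever b covers a). -/

import Mathlib

/-- The relation `a ⊴ b ↔ a = b ∨ b - a ≥ 2` on `ℤ`. -/
def tle (a b : ℤ) : Prop := a = b ∨ 2 ≤ b - a

/-- The relation `⊴` is a partial order on `ℤ`; every translation is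
an order automorphism of the resulting poset `P` and, conversely, every order
automorphism of `P` is a translation `x ↦ x + n`; the translation action of `ℤ` is free
and transitive; and `P` is not graded: there is no `ρ : ℤ → ℤ` with `ρ a < ρ b`
whenever `a ◁ b` strictly, and `ρ b = ρ a + 1` whenever `b` covers `a`. -/
theorem tle_regular_rep_not_graded :
    IsPartialOrder ℤ tle ∧
    (∀ n : ℤ, ∃ φ : tle ≃r tle, ∀ x : ℤ, φ x = x + n) ∧
    (∀ φ : tle ≃r tle, ∃ n : ℤ, ∀ x : ℤ, φ x = x + n) ∧
    (∀ n : ℤ, (∃ x : ℤ, x + n = x) → n = 0) ∧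
    (∀ x y : ℤ, ∃ n : ℤ, x + n = y) ∧
    ¬ ∃ ρ : ℤ → ℤ,
        (∀ a b : ℤ, tle a b → a ≠ b → ρ a < ρ b) ∧
        (∀ a b : ℤ,
          (tle a b ∧ a ≠ b ∧ ∀ c : ℤ, tle a c → tle c b → c = a ∨ c = b) →
          ρ b = ρ a + 1) := by
  refine ⟨?_, ?_, ?_, ?_, ?_, ?_⟩
  · exact { refl := fun a => Or.inl rfl,
            trans := fun a b c hab hbc => by unfold tle at *; omega,
            antisymm := fun a b hab hba => by unfold tle at *; omega }
  · intro n
    refine ⟨⟨Equiv.addRight n, ?_⟩, fun x => rfl⟩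
    intro a b
    simp only [Equiv.coe_addRight, tle]
    omega
  · intro φ
    have hS : ∀ a b : ℤ, 2 ≤ b - a ↔ 2 ≤ φ b - φ a := by
      intro a b
      have h1 : tle (φ a) (φ b) ↔ tle a b := φ.map_rel_iff
      have h2 : a = b ↔ φ a = φ b := ⟨fun h => by rw [h], fun h => φ.injective h⟩
      unfold tle at h1
      omega
    have hmono : ∀ a b : ℤ, a ≤ b → φ a ≤ φ b := by
      intro a b hab
      have hz : φ (φ.symm (φ a - 2)) = φ a - 2 := φ.apply_symm_apply _
      have h1 : 2 ≤ a - φ.symm (φ a - 2) := (hS _ a).mpr (by omega)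
      have h2 : 2 ≤ φ b - φ (φ.symm (φ a - 2)) := (hS _ b).mp (by omega)
      omega
    have hstep : ∀ x : ℤ, φ (x + 1) = φ x + 1 := by
      intro x
      have h1 : φ x ≤ φ (x + 1) := hmono _ _ (by omega)
      have hne : φ x ≠ φ (x + 1) := fun h => by
        have := φ.injective h; omega
      by_contra h
      have hc : φ (φ.symm (φ x + 1)) = φ x + 1 := φ.apply_symm_apply _
      have hcx : x < φ.symm (φ x + 1) := by
        by_contra h'
        push_neg at h'
        have := hmono _ _ h'
        omega
      have hcx2 : φ.symm (φ x + 1) < x + 1 := by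
        by_contra h'
        push_neg at h'
        have := hmono _ _ h'
        omega
      omega
    refine ⟨φ 0, fun x => ?_⟩
    induction x using Int.induction_on with
    | zero => simp
    | succ k ih => have := hstep (k : ℤ); omega
    | pred k ih =>
      have h := hstep (-(k : ℤ) - 1)
      rw [show -(k : ℤ) - 1 + 1 = -(k : ℤ) by ring] at h
      omega
  · intro n ⟨x, hx⟩; omega
  · intro x y; exact ⟨y - x, by ring⟩
  · rintro ⟨ρ, hlt, hcov⟩
    have c2 : ∀ a : ℤ, ρ (a + 2) = ρ a + 1 := fun a =>
      hcov a (a + 2) ⟨Or.inr (by omega), by omega,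
        fun c hc1 hc2 => by unfold tle at hc1 hc2; omega⟩
    have c3 : ∀ a : ℤ, ρ (a + 3) = ρ a + 1 := fun a =>
      hcov a (a + 3) ⟨Or.inr (by omega), by omega,
        fun c hc1 hc2 => by unfold tle at hc1 hc2; omega⟩
    have h1 := c2 0
    have h2 := c2 2
    have h3 := c2 4
    have h4 := c3 0
    have h5 := c3 3
    norm_num at h1 h2 h3 h4 h5
    omega
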